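/- If the finite connected graph G is not balanced bipartite (i.e. G is either not bipartite, or bipartite with parts of unequal sizes), then L is strictly concave on Δ: for all v, w ∈ Δ with v ≠ w and all t ∈ (0,1), L(tv + (1−t)w) > t L(v) + (1−t) L(w). -/

import Mathlib

open Finset

/-- `v_i + v_j` as a function of the unordered pair `{i,j}`. -/
noncomputable def pairSum {m : ℕ} (v : Fin m → ℝ) : Sym2 (Fin m) → ℝ :=
  Sym2.lift ⟨fun i j => v i + v j, fun i j => add_comm (v i) (v j)⟩

/-- The domain `Δ`. -/
def urnDomain {m : ℕ} (G : SimpleGraph (Fin m)) (c : ℝ) : Set (Fin m → ℝ) :=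
  {v | (∀ i, 0 ≤ v i) ∧ (∑ i, v i) = 1 ∧ ∀ i j, G.Adj i j → c ≤ v i + v j}

/-- The function `L(v) = -Σ_i v_i + (1/N) Σ_{{i,j} ∈ E} log (v_i + v_j)`. -/
noncomputable def lyap {m : ℕ} (G : SimpleGraph (Fin m)) [DecidableRel G.Adj] (N : ℕ)
    (v : Fin m → ℝ) : ℝ :=
  -∑ i, v i + (1 / (N : ℝ)) * ∑ e ∈ G.edgeFinset, Real.log (pairSum v e)

/-- If the finite connected graph `G` is not balanced bipartite, then `L` is
strictly concave on `Δ`. -/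
theorem lyap_strictly_concave_of_not_balanced_bipartite
    {m : ℕ} (hm : 2 ≤ m) (G : SimpleGraph (Fin m)) [DecidableRel G.Adj]
    (hconn : G.Connected)
    (N : ℕ) (hN : N = G.edgeFinset.card)
    (c : ℝ) (hc0 : 0 < c) (hc1 : c < 1 / (N : ℝ))
    (hnotbb : ¬ ∃ A : Finset (Fin m),
      (∀ i j, G.Adj i j → (i ∈ A ↔ j ∉ A)) ∧ 2 * A.card = m) :
    ∀ v ∈ urnDomain G c, ∀ w ∈ urnDomain G c, v ≠ w → ∀ t : ℝ, 0 < t → t < 1 →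
      t * lyap G N v + (1 - t) * lyap G N w < lyap G N (t • v + (1 - t) • w) := by
  intro v hv w hw hvw t ht0 ht1
  obtain ⟨hv0, hv1, hvc⟩ := hv
  obtain ⟨hw0, hw1, hwc⟩ := hw
  have hNpos : 0 < (N : ℝ) := by
    rcases Nat.eq_zero_or_pos N with h | h
    · exfalso; rw [h] at hc1; norm_num at hc1; linarith
    · exact_mod_cast h
  -- there is an edge where the pair sums differ
  have hexists : ∃ e ∈ G.edgeFinset, pairSum v e ≠ pairSum w e := by
    by_contra hcon
    push_neg at hcon
    apply hvw
    set d : Fin m → ℝ := fun i => v i - w i with hd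
    have hadj : ∀ i j : Fin m, G.Adj i j → d j = -d i := by
      intro i j hij
      have he : s(i, j) ∈ G.edgeFinset := by
        rw [SimpleGraph.mem_edgeFinset, SimpleGraph.mem_edgeSet]; exact hij
      have := hcon _ he
      simp only [pairSum, Sym2.lift_mk] at this
      simp only [hd]; linarith
    have hwalk : ∀ (x y : Fin m) (p : G.Walk x y), d y = (-1 : ℝ) ^ p.length * d x := by
      intro x y p
      induction p with
      | nil => simp
      | @cons a b c hab p ih =>
          have h1 : d b = -d a := hadj a b hab
          rw [SimpleGraph.Walk.length_cons, pow_succ]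
          rw [ih, h1]; ring
    have i0 : Fin m := ⟨0, by omega⟩
    have hsign : ∀ i : Fin m, d i = d i0 ∨ d i = -d i0 := by
      intro i
      obtain ⟨p⟩ := hconn.preconnected i0 i
      rcases Nat.even_or_odd p.length with hpar | hpar
      · left; rw [hwalk i0 i p, hpar.neg_one_pow, one_mul]
      · right; rw [hwalk i0 i p, hpar.neg_one_pow]; ring
    have hsum : ∑ i, d i = 0 := by
      simp only [hd, Finset.sum_sub_distrib, hv1, hw1, sub_self]
    by_cases h0 : d i0 = 0
    · funext i
      have : d i = 0 := by rcases hsign i with h | h <;> rw [h, h0] <;> ring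
      have : v i - w i = 0 := this
      linarith
    · exfalso
      apply hnotbb
      refine ⟨Finset.univ.filter (fun i => d i = d i0), ?_, ?_⟩
      · intro i j hij
        simp only [Finset.mem_filter, Finset.mem_univ, true_and]
        constructor
        · intro hi hj
          rw [hadj i j hij, hi] at hj
          apply h0; linarith
        · intro hj
          rcases hsign i with h | h
          · exact h
          · exfalso; apply hj; rw [hadj i j hij, h]; ring
      · set A := Finset.univ.filter (fun i => d i = d i0) with hA
        have hcard : A.card ≤ m := by
          simpa using Finset.card_le_univ A
        have hsplit : ∑ i ∈ A, d i + ∑ i ∈ Finset.univ.filter (fun i => ¬ d i = d i0), d i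
            = ∑ i, d i := Finset.sum_filter_add_sum_filter_not _ _ _
        have h1 : ∑ i ∈ A, d i = (A.card : ℝ) * d i0 := by
          rw [Finset.sum_congr rfl (fun i hi => (Finset.mem_filter.mp hi).2)]
          simp [mul_comm]
          exact Or.inl rfl
        have h2 : ∑ i ∈ Finset.univ.filter (fun i => ¬ d i = d i0), d i
            = ((m - A.card : ℕ) : ℝ) * (-d i0) := by
          have hall : ∀ i ∈ Finset.univ.filter (fun i => ¬ d i = d i0), d i = -d i0 := by
            intro i hi
            have hi' := (Finset.mem_filter.mp hi).2
            rcases hsign i with h | h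
            · exact absurd h hi'
            · exact h
          rw [Finset.sum_congr rfl hall, Finset.sum_const,
            Finset.filter_not, Finset.card_sdiff_of_subset (Finset.filter_subset _ _)]
          simp [hA, Finset.card_univ, nsmul_eq_mul]
        rw [h1, h2, hsum] at hsplit
        have hcast : ((m - A.card : ℕ) : ℝ) = (m : ℝ) - (A.card : ℝ) :=
          Nat.cast_sub hcard
        rw [hcast] at hsplit
        have hz : ((2 * (A.card : ℝ)) - m) * d i0 = 0 := by linear_combination hsplit
        rcases mul_eq_zero.mp hz with h | h
        · have : (2 * A.card : ℝ) = (m : ℝ) := by push_cast; linarith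
          exact_mod_cast this
        · exact absurd h h0
  obtain ⟨e0, he0, hne0⟩ := hexists
  -- positivity / bounds on pair sums for edges
  have hpv : ∀ e ∈ G.edgeFinset, 0 < pairSum v e := by
    intro e he
    induction e using Sym2.ind with
    | _ i j =>
      rw [SimpleGraph.mem_edgeFinset, SimpleGraph.mem_edgeSet] at he
      have := hvc i j he
      simp only [pairSum, Sym2.lift_mk]; linarith
  have hpw : ∀ e ∈ G.edgeFinset, 0 < pairSum w e := by
    intro e he
    induction e using Sym2.ind with
    | _ i j =>
      rw [SimpleGraph.mem_edgeFinset, SimpleGraph.mem_edgeSet] at he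
      have := hwc i j he
      simp only [pairSum, Sym2.lift_mk]; linarith
  have hlin : ∀ e : Sym2 (Fin m),
      pairSum (t • v + (1 - t) • w) e = t * pairSum v e + (1 - t) * pairSum w e := by
    intro e
    induction e using Sym2.ind with
    | _ i j =>
      simp only [pairSum, Sym2.lift_mk, Pi.add_apply, Pi.smul_apply, smul_eq_mul]
      ring
  have key : ∀ e ∈ G.edgeFinset,
      t * Real.log (pairSum v e) + (1 - t) * Real.log (pairSum w e)
        ≤ Real.log (pairSum (t • v + (1 - t) • w) e) := by
    intro e he
    rw [hlin e]
    have hb : (0:ℝ) ≤ 1 - t := by linarith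
    have hab : t + (1 - t) = 1 := by ring
    have := strictConcaveOn_log_Ioi.concaveOn.2 (Set.mem_Ioi.mpr (hpv e he))
      (Set.mem_Ioi.mpr (hpw e he)) (le_of_lt ht0) hb hab
    simpa [smul_eq_mul] using this
  have keystrict : t * Real.log (pairSum v e0) + (1 - t) * Real.log (pairSum w e0)
        < Real.log (pairSum (t • v + (1 - t) • w) e0) := by
    rw [hlin e0]
    have hb : (0:ℝ) < 1 - t := by linarith
    have hab : t + (1 - t) = 1 := by ring
    have := strictConcaveOn_log_Ioi.2 (Set.mem_Ioi.mpr (hpv e0 he0))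
      (Set.mem_Ioi.mpr (hpw e0 he0)) hne0 ht0 hb hab
    simpa [smul_eq_mul] using this
  have hsumlt : ∑ e ∈ G.edgeFinset,
      (t * Real.log (pairSum v e) + (1 - t) * Real.log (pairSum w e))
      < ∑ e ∈ G.edgeFinset, Real.log (pairSum (t • v + (1 - t) • w) e) :=
    Finset.sum_lt_sum key ⟨e0, he0, keystrict⟩
  have hsumu : ∑ i, (t • v + (1 - t) • w) i = 1 := by
    simp only [Pi.add_apply, Pi.smul_apply, smul_eq_mul]
    rw [Finset.sum_add_distrib, ← Finset.mul_sum, ← Finset.mul_sum, hv1, hw1]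
    ring
  have hexp : ∑ e ∈ G.edgeFinset,
      (t * Real.log (pairSum v e) + (1 - t) * Real.log (pairSum w e))
      = t * ∑ e ∈ G.edgeFinset, Real.log (pairSum v e)
        + (1 - t) * ∑ e ∈ G.edgeFinset, Real.log (pairSum w e) := by
    rw [Finset.sum_add_distrib, Finset.mul_sum, Finset.mul_sum]
  simp only [lyap, hv1, hw1, hsumu]
  rw [hexp] at hsumlt
  have h1N : 0 < 1 / (N : ℝ) := by positivity
  nlinarith [hsumlt, h1N]
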